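/- arXiv:2312.02799 — 2 statements merged into one kernel-verified Lean document; each statement's English description precedes it below -/
import Mathlib

section
/- (Infinite glider streams) For every natural number p ≥ 14, there exists a configuration f : ℤ × ℤ → Bool with infinite support such that L^[p] f = f and L^[q] f ≠ f for every q with 0 < q < p; that is, allowing infinitely many live cells, oscillators of every period p ≥ 14 exist. -/
/-- The 8 neighbours of a cell: cells at Chebyshev distance 1. -/
noncomputable def neighbours (c : ℤ × ℤ) : Finset (ℤ × ℤ) :=
  (Finset.Icc (c.1 - 1) (c.1 + 1) ×ˢ Finset.Icc (c.2 - 1) (c.2 + 1)).erase c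

/-- Number of live neighbours of `c` in configuration `f`. -/
noncomputable def liveNeighbours (f : ℤ × ℤ → Bool) (c : ℤ × ℤ) : ℕ :=
  ((neighbours c).filter (fun d => f d = true)).card

/-- One step of Conway's Game of Life: a cell is alive iff it has exactly 3
live neighbours, or it is alive and has exactly 2 live neighbours. -/
noncomputable def lifeStep (f : ℤ × ℤ → Bool) : ℤ × ℤ → Bool := fun c =>
  (liveNeighbours f c == 3) || (f c && (liveNeighbours f c == 2))

/-- The support of a configuration: the set of live cells. -/
def support (f : ℤ × ℤ → Bool) : Set (ℤ × ℤ) := {c | f c = true}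

/-- An oscillator of period `p`: finite nonempty support, `L^[p] f = f`,
and `L^[q] f ≠ f` for all `0 < q < p`. -/
def IsOscillator (p : ℕ) (f : ℤ × ℤ → Bool) : Prop :=
  (support f).Finite ∧ (support f).Nonempty ∧
    lifeStep^[p] f = f ∧ ∀ q : ℕ, 0 < q → q < p → lifeStep^[q] f ≠ f

/- ====================  auxiliary development  ==================== -/

/-- Cells of the four glider phases (phase `r` for `r = 0,1,2,3`). -/
def basePts (r : ℤ) : List (ℤ × ℤ) :=
  if r = 0 then [(1,0),(2,1),(0,2),(1,2),(2,2)]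
  else if r = 1 then [(0,1),(2,1),(1,2),(2,2),(1,3)]
  else if r = 2 then [(0,2),(1,3),(2,1),(2,2),(2,3)]
  else if r = 3 then [(1,1),(1,3),(2,2),(2,3),(3,2)]
  else []

/-- The glider at time `t`: phase `t % 4`, translated by `(t/4, t/4)`. -/
def G (t : ℤ) (c : ℤ × ℤ) : Bool := decide ((c.1 - t / 4, c.2 - t / 4) ∈ basePts (t % 4))

/-- Glider stream of period `p` at time `k`. -/
noncomputable def Fbase (p k a b : ℤ) (c : ℤ × ℤ) : Bool :=
  decide (∃ t ∈ Finset.Icc a b, t % p = k % p ∧ G t c = true)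

noncomputable def F (p k : ℤ) (c : ℤ × ℤ) : Bool :=
  Fbase p k (2*(c.1+c.2) - 8) (2*(c.1+c.2) - 1) c

lemma mem_base {r : ℤ} (hr0 : 0 ≤ r) (hr1 : r < 4) {d : ℤ × ℤ} (h : d ∈ basePts r) :
    (2*(d.1+d.2) - 8 ≤ r ∧ r ≤ 2*(d.1+d.2) - 1) ∧
      (0 ≤ d.1 ∧ d.1 ≤ 3 ∧ 0 ≤ d.2 ∧ d.2 ≤ 3) := by
  interval_cases r <;> simp [basePts] at h <;>
    rcases h with rfl|rfl|rfl|rfl|rfl <;> norm_num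

lemma G_diag {t : ℤ} {c : ℤ × ℤ} (h : G t c = true) :
    (2*(c.1+c.2) - 8 ≤ t ∧ t ≤ 2*(c.1+c.2) - 1) ∧
      (t/4 ≤ c.1 ∧ c.1 ≤ t/4 + 3 ∧ t/4 ≤ c.2 ∧ c.2 ≤ t/4 + 3) := by
  rw [G, decide_eq_true_eq] at h
  have h4a : 0 ≤ t % 4 := by omega
  have h4b : t % 4 < 4 := by omega
  have hb := mem_base h4a h4b h
  dsimp only at hb
  omega

lemma Gshift (q s : ℤ) (c : ℤ × ℤ) : G (4*q + s) c = G s (c.1 - q, c.2 - q) := by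
  have h1 : (4*q + s) % 4 = s % 4 := by omega
  have h2 : (4*q + s) / 4 = q + s / 4 := by omega
  simp only [G, h1, h2]
  rw [show (c.1 - (q + s/4), c.2 - (q + s/4)) = ((c.1 - q) - s/4, (c.2 - q) - s/4) by
    rw [sub_add_eq_sub_sub, sub_add_eq_sub_sub]]

lemma mem_neighbours {c d : ℤ × ℤ} :
    d ∈ neighbours c ↔ ¬(d.1 = c.1 ∧ d.2 = c.2) ∧
      (c.1 - 1 ≤ d.1 ∧ d.1 ≤ c.1 + 1 ∧ c.2 - 1 ≤ d.2 ∧ d.2 ≤ c.2 + 1) := by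
  unfold neighbours
  rw [Finset.mem_erase, Finset.mem_product]
  simp only [Finset.mem_Icc, ne_eq, Prod.ext_iff]
  tauto

lemma liveN_congr {f g : ℤ × ℤ → Bool} {c : ℤ × ℤ} (h : ∀ d ∈ neighbours c, f d = g d) :
    liveNeighbours f c = liveNeighbours g c := by
  unfold liveNeighbours
  congr 1
  apply Finset.filter_congr
  intro d hd
  simp [h d hd]

lemma lifeStep_congr {f g : ℤ × ℤ → Bool} {c : ℤ × ℤ} (h0 : f c = g c)
    (h : ∀ d ∈ neighbours c, f d = g d) : lifeStep f c = lifeStep g c := by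
  unfold lifeStep
  rw [liveN_congr h, h0]

lemma liveN_zero {f : ℤ × ℤ → Bool} {c : ℤ × ℤ} (h : ∀ d ∈ neighbours c, f d = false) :
    liveNeighbours f c = 0 := by
  unfold liveNeighbours
  rw [Finset.card_eq_zero, Finset.filter_eq_empty_iff]
  intro d hd
  simp [h d hd]

lemma liveN_shift (f : ℤ × ℤ → Bool) (q : ℤ) (c : ℤ × ℤ) :
    liveNeighbours (fun d => f (d.1 - q, d.2 - q)) c = liveNeighbours f (c.1 - q, c.2 - q) := by
  unfold liveNeighbours
  apply Finset.card_bij (fun d _ => ((d.1 - q : ℤ), (d.2 - q : ℤ)))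
  · intro a ha
    simp only [Finset.mem_filter] at ha ⊢
    obtain ⟨ha1, ha2⟩ := ha
    rw [mem_neighbours] at ha1
    refine ⟨mem_neighbours.2 ?_, ha2⟩
    dsimp only
    constructor
    · intro hh; exact ha1.1 ⟨by omega, by omega⟩
    · refine ⟨by omega, by omega, by omega, by omega⟩
  · intro a _ b _ hab
    simp only [Prod.mk.injEq] at hab
    exact Prod.ext (by omega) (by omega)
  · intro b hb
    simp only [Finset.mem_filter] at hb ⊢
    obtain ⟨hb1, hb2⟩ := hb
    rw [mem_neighbours] at hb1
    refine ⟨(b.1 + q, b.2 + q), ⟨mem_neighbours.2 ?_, ?_⟩, ?_⟩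
    · dsimp only
      constructor
      · intro hh; exact hb1.1 ⟨by omega, by omega⟩
      · refine ⟨by omega, by omega, by omega, by omega⟩
    · dsimp only
      rw [show ((b.1 + q - q : ℤ), (b.2 + q - q : ℤ)) = b by
        refine Prod.ext (by dsimp only; omega) (by dsimp only; omega)]
      exact hb2
    · dsimp only
      refine Prod.ext (by dsimp only; omega) (by dsimp only; omega)

lemma lifeStep_shift (f : ℤ × ℤ → Bool) (q : ℤ) (c : ℤ × ℤ) :
    lifeStep (fun d => f (d.1 - q, d.2 - q)) c = lifeStep f (c.1 - q, c.2 - q) := by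
  unfold lifeStep
  rw [liveN_shift]

set_option maxHeartbeats 1000000 in
lemma glider_box : ∀ s ∈ Finset.Icc (0:ℤ) 3, ∀ c ∈ Finset.Icc (-2:ℤ) 5 ×ˢ Finset.Icc (-2:ℤ) 5,
    lifeStep (G s) c = G (s+1) c := by decide

set_option maxHeartbeats 4000000 in
set_option maxRecDepth 10000 in
lemma pair_box14 : ∀ s ∈ Finset.Icc (0:ℤ) 3, ∀ c ∈ Finset.Icc (-2:ℤ) 8 ×ˢ Finset.Icc (-2:ℤ) 8,
    lifeStep (fun d => G s d || G (s+14) d) c = (G (s+1) c || G (s+15) c) := by decide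

set_option maxHeartbeats 4000000 in
set_option maxRecDepth 10000 in
lemma pair_box15 : ∀ s ∈ Finset.Icc (0:ℤ) 3, ∀ c ∈ Finset.Icc (-2:ℤ) 8 ×ˢ Finset.Icc (-2:ℤ) 8,
    lifeStep (fun d => G s d || G (s+15) d) c = (G (s+1) c || G (s+16) c) := by decide

/-- Support bound: for `0 ≤ s ≤ 19` the glider `G s` lives in `[0,7]²`. -/
lemma G_supp {s : ℤ} (hs0 : 0 ≤ s) (hs1 : s ≤ 19) {d : ℤ × ℤ}
    (hd : d.1 < 0 ∨ 7 < d.1 ∨ d.2 < 0 ∨ 7 < d.2) : G s d = false := by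
  by_contra h
  have h' : G s d = true := by simpa using h
  have hb := (G_diag h').2
  omega

/-- Support bound: for `0 ≤ s ≤ 4` the glider `G s` lives in `[0,4]²`. -/
lemma G_supp4 {s : ℤ} (hs0 : 0 ≤ s) (hs1 : s ≤ 4) {d : ℤ × ℤ}
    (hd : d.1 < 0 ∨ 4 < d.1 ∨ d.2 < 0 ∨ 4 < d.2) : G s d = false := by
  by_contra h
  have h' : G s d = true := by simpa using h
  have hb := (G_diag h').2
  omega

lemma glider_step (t : ℤ) (c : ℤ × ℤ) : lifeStep (G t) c = G (t+1) c := by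
  obtain ⟨q, r, hr0, hr1, rfl⟩ : ∃ q r, 0 ≤ r ∧ r < 4 ∧ t = 4*q + r :=
    ⟨t/4, t%4, by omega, by omega, by omega⟩
  have hG : (G (4*q + r)) = fun d : ℤ × ℤ => G r (d.1 - q, d.2 - q) :=
    funext fun d => Gshift q r d
  have h2 : G (4*q + r + 1) c = G (r+1) (c.1 - q, c.2 - q) := by
    rw [show 4*q + r + 1 = 4*q + (r+1) by ring, Gshift]
  rw [hG, lifeStep_shift, h2]
  set c' : ℤ × ℤ := (c.1 - q, c.2 - q) with hc'
  by_cases hin : -2 ≤ c'.1 ∧ c'.1 ≤ 5 ∧ -2 ≤ c'.2 ∧ c'.2 ≤ 5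
  · exact glider_box r (Finset.mem_Icc.2 ⟨hr0, by omega⟩) c'
      (Finset.mem_product.2 ⟨Finset.mem_Icc.2 ⟨hin.1, hin.2.1⟩,
        Finset.mem_Icc.2 ⟨hin.2.2.1, hin.2.2.2⟩⟩)
  · push_neg at hin
    have hns : ∀ d ∈ neighbours c', G r d = false := by
      intro d hd
      rw [mem_neighbours] at hd
      exact G_supp4 hr0 (by omega) (by omega)
    have h0 : G r c' = false := G_supp4 hr0 (by omega) (by omega)
    have hrhs : G (r+1) c' = false := G_supp4 (by omega) (by omega) (by omega)
    unfold lifeStep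
    rw [liveN_zero hns, h0, hrhs]
    rfl

lemma pair_step {P : ℤ} (hP : P = 14 ∨ P = 15) (t : ℤ) (c : ℤ × ℤ) :
    lifeStep (fun d => G t d || G (t+P) d) c = (G (t+1) c || G (t+P+1) c) := by
  obtain ⟨q, r, hr0, hr1, rfl⟩ : ∃ q r, 0 ≤ r ∧ r < 4 ∧ t = 4*q + r :=
    ⟨t/4, t%4, by omega, by omega, by omega⟩
  have hG : (fun d : ℤ × ℤ => G (4*q + r) d || G (4*q + r + P) d)
      = fun d : ℤ × ℤ => (fun d' : ℤ × ℤ => G r d' || G (r+P) d') (d.1 - q, d.2 - q) := by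
    funext d
    rw [Gshift q r d, show 4*q + r + P = 4*q + (r+P) by ring, Gshift]
  have h2 : G (4*q + r + 1) c = G (r+1) (c.1 - q, c.2 - q) := by
    rw [show 4*q + r + 1 = 4*q + (r+1) by ring, Gshift]
  have h3 : G (4*q + r + P + 1) c = G (r+P+1) (c.1 - q, c.2 - q) := by
    rw [show 4*q + r + P + 1 = 4*q + (r+P+1) by ring, Gshift]
  rw [hG, lifeStep_shift (fun d' : ℤ × ℤ => G r d' || G (r+P) d') q c, h2, h3]
  set c' : ℤ × ℤ := (c.1 - q, c.2 - q) with hc'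
  by_cases hin : -2 ≤ c'.1 ∧ c'.1 ≤ 8 ∧ -2 ≤ c'.2 ∧ c'.2 ≤ 8
  · have hmem : c' ∈ Finset.Icc (-2:ℤ) 8 ×ˢ Finset.Icc (-2:ℤ) 8 :=
      Finset.mem_product.2 ⟨Finset.mem_Icc.2 ⟨hin.1, hin.2.1⟩,
        Finset.mem_Icc.2 ⟨hin.2.2.1, hin.2.2.2⟩⟩
    rcases hP with rfl | rfl
    · rw [show r + 14 + 1 = r + 15 by ring]
      exact pair_box14 r (Finset.mem_Icc.2 ⟨hr0, by omega⟩) c' hmem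
    · rw [show r + 15 + 1 = r + 16 by ring]
      exact pair_box15 r (Finset.mem_Icc.2 ⟨hr0, by omega⟩) c' hmem
  · push_neg at hin
    have hns : ∀ d ∈ neighbours c', (G r d || G (r+P) d) = false := by
      intro d hd
      rw [mem_neighbours] at hd
      rw [G_supp hr0 (by omega) (by omega), G_supp (by omega) (by omega) (by omega)]
      rfl
    have h0 : (G r c' || G (r+P) c') = false := by
      rw [G_supp hr0 (by omega) (by omega), G_supp (by omega) (by omega) (by omega)]
      rfl
    have hr1' : G (r+1) c' = false := G_supp (by omega) (by omega) (by omega)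
    have hr2' : G (r+P+1) c' = false := G_supp (by omega) (by omega) (by omega)
    unfold lifeStep
    rw [liveN_zero hns]
    simp only [h0, hr1', hr2']
    rfl

lemma F_iff {p k : ℤ} {c : ℤ × ℤ} : F p k c = true ↔ ∃ t, t % p = k % p ∧ G t c = true := by
  unfold F Fbase
  rw [decide_eq_true_eq]
  constructor
  · rintro ⟨t, _, h1, h2⟩; exact ⟨t, h1, h2⟩
  · rintro ⟨t, h1, h2⟩
    exact ⟨t, Finset.mem_Icc.2 ⟨(G_diag h2).1.1, (G_diag h2).1.2⟩, h1, h2⟩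

lemma stream_step (p : ℤ) (hp : 14 ≤ p) (k : ℤ) : lifeStep (F p k) = F p (k+1) := by
  funext c
  set D := c.1 + c.2 with hD
  set t0 := 2*D - 12 + (k - (2*D-12)) % p with ht0def
  have hp0 : (0:ℤ) < p := by omega
  have hrr0 : 0 ≤ (k - (2*D-12)) % p := Int.emod_nonneg _ (by omega)
  have hrr1 : (k - (2*D-12)) % p < p := Int.emod_lt_of_pos _ hp0
  have ht0a : 2*D - 12 ≤ t0 := by omega
  have ht0b : t0 ≤ 2*D - 13 + p := by omega
  have hkey : t0 + p * ((k - (2*D-12)) / p) = k := by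
    have h := Int.emod_add_mul_ediv (k - (2*D-12)) p
    linarith
  have hmod : t0 % p = k % p := by
    conv_rhs => rw [← hkey]
    rw [Int.add_mul_emod_self_left]
  -- the local identification of the stream with (at most) two gliders
  have hloc : ∀ d : ℤ × ℤ, c.1 - 1 ≤ d.1 → d.1 ≤ c.1 + 1 → c.2 - 1 ≤ d.2 → d.2 ≤ c.2 + 1 →
      F p k d = (G t0 d || G (t0 + p) d) := by
    intro d h1 h2 h3 h4
    rw [Bool.eq_iff_iff, F_iff, Bool.or_eq_true]
    constructor
    · rintro ⟨t, hmodt, hGt⟩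
      have hb := (G_diag hGt).1
      have hdvd : p ∣ t - t0 := by
        have hh : t0 % p = t % p := by rw [hmodt, hmod]
        exact Int.ModEq.dvd hh
      obtain ⟨m, hm⟩ := hdvd
      have hm0 : m = 0 ∨ m = 1 := by
        rcases lt_trichotomy m 0 with h' | h' | h'
        · exfalso
          have hh : p * m ≤ p * (-1) := mul_le_mul_of_nonneg_left (by omega) (by omega)
          have : t - t0 ≤ -p := by linarith
          omega
        · left; exact h'
        · rcases eq_or_lt_of_le (by omega : (1:ℤ) ≤ m) with h'' | h''
          · right; exact h''.symm
          · exfalso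
            have hh : p * 2 ≤ p * m := mul_le_mul_of_nonneg_left (by omega) (by omega)
            have : 2*p ≤ t - t0 := by linarith
            omega
      rcases hm0 with rfl | rfl
      · left
        have : t = t0 := by omega
        rwa [← this]
      · right
        have : t = t0 + p := by omega
        rwa [← this]
    · rintro (h | h)
      · exact ⟨t0, hmod, h⟩
      · refine ⟨t0 + p, ?_, h⟩
        have hh : (t0 + p) % p = t0 % p := by
          conv_lhs => rw [show t0 + p = t0 + p * 1 by ring]
          rw [Int.add_mul_emod_self_left]
        rw [hh]
        exact hmod
  have e2 : G (t0 + p + 1) c = false := by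
    by_contra hcc
    have h' : G (t0 + p + 1) c = true := by simpa using hcc
    have hb := (G_diag h').1
    omega
  have hstep : lifeStep (F p k) c = lifeStep (fun d => G t0 d || G (t0+p) d) c := by
    apply lifeStep_congr
    · exact hloc c (by omega) (by omega) (by omega) (by omega)
    · intro d hd
      rw [mem_neighbours] at hd
      exact hloc d (by omega) (by omega) (by omega) (by omega)
  have hpair : lifeStep (fun d => G t0 d || G (t0+p) d) c = G (t0+1) c := by
    rcases (show p = 14 ∨ p = 15 ∨ 16 ≤ p by omega) with h | h | h
    · subst h
      rw [pair_step (Or.inl rfl) t0 c, e2, Bool.or_false]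
    · subst h
      rw [pair_step (Or.inr rfl) t0 c, e2, Bool.or_false]
    · have hfar : ∀ d : ℤ × ℤ, c.1 - 1 ≤ d.1 → d.1 ≤ c.1+1 → c.2-1 ≤ d.2 → d.2 ≤ c.2+1 →
          G (t0+p) d = false := by
        intro d h1 h2 h3 h4
        by_contra hcc
        have h' : G (t0+p) d = true := by simpa using hcc
        have hb := (G_diag h').1
        omega
      have e1 : lifeStep (fun d => G t0 d || G (t0+p) d) c = lifeStep (G t0) c := by
        apply lifeStep_congr
        · rw [hfar c (by omega) (by omega) (by omega) (by omega), Bool.or_false]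
        · intro d hd
          rw [mem_neighbours] at hd
          rw [hfar d (by omega) (by omega) (by omega) (by omega), Bool.or_false]
      rw [e1, glider_step]
  have hfin : F p (k+1) c = G (t0+1) c := by
    rw [Bool.eq_iff_iff, F_iff]
    constructor
    · rintro ⟨t, hmodt, hGt⟩
      have hb := (G_diag hGt).1
      have hdvd : p ∣ t - (t0+1) := by
        have h1 : (t0+1) % p = (k+1) % p := Int.ModEq.add_right 1 hmod
        have hh : (t0+1) % p = t % p := by rw [h1, hmodt]
        exact Int.ModEq.dvd hh
      obtain ⟨m, hm⟩ := hdvd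
      have hm0 : m = 0 := by
        rcases lt_trichotomy m 0 with h' | h' | h'
        · exfalso
          have hh : p * m ≤ p * (-1) := mul_le_mul_of_nonneg_left (by omega) (by omega)
          have : t - (t0+1) ≤ -p := by linarith
          omega
        · exact h'
        · exfalso
          have hh : p * 1 ≤ p * m := mul_le_mul_of_nonneg_left (by omega) (by omega)
          have : p ≤ t - (t0+1) := by linarith
          omega
      subst hm0
      have : t = t0 + 1 := by omega
      rwa [← this]
    · intro h
      exact ⟨t0+1, Int.ModEq.add_right 1 hmod, h⟩
  rw [hstep, hpair, hfin]

lemma stream_iter (p : ℤ) (hp : 14 ≤ p) (n : ℕ) : lifeStep^[n] (F p 0) = F p (n : ℤ) := by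
  induction n with
  | zero => simp
  | succ n ih =>
    rw [Function.iterate_succ_apply', ih, stream_step p hp]
    norm_num

lemma F_per (p k : ℤ) : F p (k + p) = F p k := by
  have hh : (k + p) % p = k % p := by
    conv_lhs => rw [show k + p = k + p * 1 by ring]
    rw [Int.add_mul_emod_self_left]
  funext c
  unfold F Fbase
  simp only [hh]

lemma F0_false (p : ℤ) (hp : 14 ≤ p) (c : ℤ × ℤ)
    (hb1 : -13 ≤ 2*(c.1+c.2) - 8) (hb2 : 2*(c.1+c.2) - 1 ≤ 13)
    (hc : G 0 c = false) : F p 0 c = false := by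
  by_contra hcc
  have h1 : F p 0 c = true := by simpa using hcc
  rw [F_iff] at h1
  obtain ⟨s, hsm, hsG⟩ := h1
  have hsb := (G_diag hsG).1
  have hdvd : p ∣ s := Int.dvd_of_emod_eq_zero (by rw [hsm]; exact Int.zero_emod p)
  obtain ⟨m, hm⟩ := hdvd
  have hm0 : m = 0 := by
    rcases lt_trichotomy m 0 with h' | h' | h'
    · exfalso
      have hh : p * m ≤ p * (-1) := mul_le_mul_of_nonneg_left (by omega) (by omega)
      have : s ≤ -p := by linarith
      omega
    · exact h'
    · exfalso
      have hh : p * 1 ≤ p * m := mul_le_mul_of_nonneg_left (by omega) (by omega)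
      have : p ≤ s := by linarith
      omega
  subst hm0
  have hs0 : s = 0 := by omega
  subst hs0
  rw [hsG] at hc
  exact absurd hc (by simp)

/-- Infinite glider streams: allowing infinitely many live cells, oscillators
of every period `p ≥ 14` exist. -/
theorem infinite_oscillators : ∀ p : ℕ, 14 ≤ p →
    ∃ f : ℤ × ℤ → Bool, (support f).Infinite ∧ lifeStep^[p] f = f ∧
      ∀ q : ℕ, 0 < q → q < p → lifeStep^[q] f ≠ f := by
  intro p hp
  have hpz : (14:ℤ) ≤ (p:ℤ) := by exact_mod_cast hp
  refine ⟨F (p:ℤ) 0, ?_, ?_, ?_⟩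
  · -- infinite support
    apply Set.infinite_of_injective_forall_mem
      (f := fun n : ℕ => ((1 + (p:ℤ)*n, (p:ℤ)*n) : ℤ × ℤ))
    · intro a b hab
      simp only [Prod.mk.injEq] at hab
      have h1 : (p:ℤ) * a = (p:ℤ) * b := hab.2
      have h2 : (a:ℤ) = b := mul_left_cancel₀ (by omega : (p:ℤ) ≠ 0) h1
      exact_mod_cast h2
    · intro n
      show F (p:ℤ) 0 (1 + (p:ℤ)*n, (p:ℤ)*n) = true
      rw [F_iff]
      refine ⟨4*((p:ℤ)*n), ?_, ?_⟩
      · have h1 : (4*((p:ℤ)*n)) % p = 0 := by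
          rw [show (4:ℤ)*((p:ℤ)*n) = p * (4*n) by ring]
          exact Int.mul_emod_right p _
        rw [h1, Int.zero_emod]
      · rw [show (4*((p:ℤ)*n) = 4*((p:ℤ)*n) + 0) by ring, Gshift]
        rw [show ((1 + (p:ℤ)*n) - (p:ℤ)*n, ((p:ℤ)*n) - (p:ℤ)*n) = ((1:ℤ), (0:ℤ)) by
          rw [Prod.mk.injEq]
          constructor <;> ring]
        decide
  · -- period p
    rw [stream_iter (p:ℤ) hpz p]
    have h := F_per (p:ℤ) 0
    rw [zero_add] at h
    exact h
  · -- no smaller period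
    intro q hq0 hqp hiter
    rw [stream_iter (p:ℤ) hpz q] at hiter
    -- hiter : F p q = F p 0
    have h10 : F (p:ℤ) 0 ((1:ℤ),(0:ℤ)) = true := by
      rw [F_iff]
      exact ⟨0, rfl, by decide⟩
    have h10' : F (p:ℤ) (q:ℤ) ((1:ℤ),(0:ℤ)) = true := by rw [hiter]; exact h10
    rw [F_iff] at h10'
    obtain ⟨t, htm, htG⟩ := h10'
    have hb := (G_diag htG).1
    have ht5 : t = 0 ∨ t = -2 ∨ t = -3 ∨ t = -4 ∨ t = -5 := by
      have hfin : ∀ s ∈ Finset.Icc (-6:ℤ) 1, G s ((1:ℤ),(0:ℤ)) = true →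
          (s = 0 ∨ s = -2 ∨ s = -3 ∨ s = -4 ∨ s = -5) := by decide
      exact hfin t (Finset.mem_Icc.2 ⟨by omega, by omega⟩) htG
    have hcontra : ∀ c : ℤ × ℤ, F (p:ℤ) (q:ℤ) c = true → F (p:ℤ) 0 c = false → False := by
      intro c h1 h2
      rw [hiter, h2] at h1
      exact absurd h1 (by simp)
    rcases ht5 with rfl | rfl | rfl | rfl | rfl
    · -- t = 0 : q ≡ 0 mod p, impossible
      have h1 : (q:ℤ) % p = 0 := by rw [← htm, Int.zero_emod]
      have h2 : (q:ℤ) % p = q := Int.emod_eq_of_lt (by positivity) (by exact_mod_cast hqp)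
      have : (q:ℤ) = 0 := by omega
      simp at this
      omega
    · exact hcontra ((1:ℤ),(1:ℤ)) (F_iff.2 ⟨-2, htm, by decide⟩)
        (F0_false _ hpz _ (by norm_num) (by norm_num) (by decide))
    · exact hcontra ((1:ℤ),(1:ℤ)) (F_iff.2 ⟨-3, htm, by decide⟩)
        (F0_false _ hpz _ (by norm_num) (by norm_num) (by decide))
    · exact hcontra ((1:ℤ),(1:ℤ)) (F_iff.2 ⟨-4, htm, by decide⟩)
        (F0_false _ hpz _ (by norm_num) (by norm_num) (by decide))
    · exact hcontra ((0:ℤ),(1:ℤ)) (F_iff.2 ⟨-5, htm, by decide⟩)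
        (F0_false _ hpz _ (by norm_num) (by norm_num) (by decide))
end

section
/- (Existence of the glider) There exists a configuration f : ℤ × ℤ → Bool with finite nonempty support such that L^[4] f is the translate of f by the vector (1, 1); that is, there is a spaceship of period 4 that moves 1 cell diagonally every 4 generations. -/
/-! ### Glider auxiliary definitions -/

def g0 : ℤ × ℤ → Bool := fun c =>
  decide (c ∈ ([(0,0),(1,-2),(1,0),(2,-1),(2,0)] : List (ℤ × ℤ)))
def g1 : ℤ × ℤ → Bool := fun c =>
  decide (c ∈ ([(0,-1),(1,0),(1,1),(2,-1),(2,0)] : List (ℤ × ℤ)))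
def g2 : ℤ × ℤ → Bool := fun c =>
  decide (c ∈ ([(0,0),(1,1),(2,-1),(2,0),(2,1)] : List (ℤ × ℤ)))
def g3 : ℤ × ℤ → Bool := fun c =>
  decide (c ∈ ([(1,-1),(1,1),(2,0),(2,1),(3,0)] : List (ℤ × ℤ)))
def g4 : ℤ × ℤ → Bool := fun c =>
  decide (c ∈ ([(1,1),(2,-1),(2,1),(3,0),(3,1)] : List (ℤ × ℤ)))

noncomputable def outerBox : Finset (ℤ × ℤ) := Finset.Icc (-1) 4 ×ˢ Finset.Icc (-3) 2

lemma mem_neighbours_bounds {c d : ℤ × ℤ} (h : d ∈ neighbours c) :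
    c.1 - 1 ≤ d.1 ∧ d.1 ≤ c.1 + 1 ∧ c.2 - 1 ≤ d.2 ∧ d.2 ≤ c.2 + 1 := by
  simp only [neighbours, Finset.mem_erase, Finset.mem_product, Finset.mem_Icc] at h
  exact ⟨h.2.1.1, h.2.1.2, h.2.2.1, h.2.2.2⟩

lemma lifeStep_false {f : ℤ × ℤ → Bool} {c : ℤ × ℤ} (hc : f c = false)
    (h : ∀ d ∈ neighbours c, f d = false) : lifeStep f c = false := by
  have hz : liveNeighbours f c = 0 := by
    unfold liveNeighbours
    rw [Finset.card_eq_zero, Finset.filter_eq_empty_iff]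
    intro d hd
    simp [h d hd]
  simp [lifeStep, hz, hc]

lemma g0_bound {c : ℤ × ℤ} (h : g0 c = true) :
    0 ≤ c.1 ∧ c.1 ≤ 3 ∧ -2 ≤ c.2 ∧ c.2 ≤ 1 := by
  simp only [g0, decide_eq_true_eq, List.mem_cons, List.not_mem_nil, or_false] at h
  rcases h with rfl|rfl|rfl|rfl|rfl <;> norm_num

lemma g1_bound {c : ℤ × ℤ} (h : g1 c = true) :
    0 ≤ c.1 ∧ c.1 ≤ 3 ∧ -2 ≤ c.2 ∧ c.2 ≤ 1 := by
  simp only [g1, decide_eq_true_eq, List.mem_cons, List.not_mem_nil, or_false] at h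
  rcases h with rfl|rfl|rfl|rfl|rfl <;> norm_num

lemma g2_bound {c : ℤ × ℤ} (h : g2 c = true) :
    0 ≤ c.1 ∧ c.1 ≤ 3 ∧ -2 ≤ c.2 ∧ c.2 ≤ 1 := by
  simp only [g2, decide_eq_true_eq, List.mem_cons, List.not_mem_nil, or_false] at h
  rcases h with rfl|rfl|rfl|rfl|rfl <;> norm_num

lemma g3_bound {c : ℤ × ℤ} (h : g3 c = true) :
    0 ≤ c.1 ∧ c.1 ≤ 3 ∧ -2 ≤ c.2 ∧ c.2 ≤ 1 := by
  simp only [g3, decide_eq_true_eq, List.mem_cons, List.not_mem_nil, or_false] at h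
  rcases h with rfl|rfl|rfl|rfl|rfl <;> norm_num

lemma g4_bound {c : ℤ × ℤ} (h : g4 c = true) :
    0 ≤ c.1 ∧ c.1 ≤ 3 ∧ -2 ≤ c.2 ∧ c.2 ≤ 1 := by
  simp only [g4, decide_eq_true_eq, List.mem_cons, List.not_mem_nil, or_false] at h
  rcases h with rfl|rfl|rfl|rfl|rfl <;> norm_num

lemma step_eq {f g : ℤ × ℤ → Bool}
    (hf : ∀ c : ℤ × ℤ, f c = true → 0 ≤ c.1 ∧ c.1 ≤ 3 ∧ -2 ≤ c.2 ∧ c.2 ≤ 1)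
    (hg : ∀ c : ℤ × ℤ, g c = true → 0 ≤ c.1 ∧ c.1 ≤ 3 ∧ -2 ≤ c.2 ∧ c.2 ≤ 1)
    (hin : ∀ c ∈ outerBox, lifeStep f c = g c) : lifeStep f = g := by
  funext c
  by_cases hc : c ∈ outerBox
  · exact hin c hc
  · simp only [outerBox, Finset.mem_product, Finset.mem_Icc, not_and_or, not_le] at hc
    have hgc : g c = false := by
      cases hgc : g c with
      | false => rfl
      | true => have := hg c hgc; omega
    rw [hgc]
    apply lifeStep_false
    · cases hfc : f c with
      | false => rfl
      | true => have := hf c hfc; omega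
    · intro d hd
      have hb := mem_neighbours_bounds hd
      cases hfd : f d with
      | false => rfl
      | true => have := hf d hfd; omega

lemma step01 : lifeStep g0 = g1 := by
  apply step_eq (fun c => g0_bound) (fun c => g1_bound)
  decide

lemma step12 : lifeStep g1 = g2 := by
  apply step_eq (fun c => g1_bound) (fun c => g2_bound)
  decide

lemma step23 : lifeStep g2 = g3 := by
  apply step_eq (fun c => g2_bound) (fun c => g3_bound)
  decide

lemma step34 : lifeStep g3 = g4 := by
  apply step_eq (fun c => g3_bound) (fun c => g4_bound)
  decide

lemma g4_translate : g4 = fun c => g0 (c - (1, 1)) := by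
  funext c
  by_cases hc : c ∈ outerBox
  · have : ∀ c ∈ outerBox, g4 c = g0 (c - (1, 1)) := by decide
    exact this c hc
  · simp only [outerBox, Finset.mem_product, Finset.mem_Icc, not_and_or, not_le] at hc
    have h4 : g4 c = false := by
      cases h : g4 c with
      | false => rfl
      | true => have := g4_bound h; omega
    have h0 : g0 (c - (1, 1)) = false := by
      cases h : g0 (c - (1, 1)) with
      | false => rfl
      | true =>
        have := g0_bound h
        simp only [Prod.fst_sub, Prod.snd_sub] at this
        omega
    rw [h4]; exact h0.symm

/-- Existence of the glider: a finite nonempty pattern which after 4 generations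
is the translate of itself by `(1, 1)`. -/
theorem glider_exists :
    ∃ f : ℤ × ℤ → Bool, (support f).Finite ∧ (support f).Nonempty ∧
      lifeStep^[4] f = fun c => f (c - (1, 1)) := by
  refine ⟨g0, ?_, ?_, ?_⟩
  · apply Set.Finite.subset (([(0,0),(1,-2),(1,0),(2,-1),(2,0)] : List (ℤ × ℤ)).toFinset :
      Finset (ℤ × ℤ)).finite_toSet
    intro c hc
    simp only [support, Set.mem_setOf_eq, g0, decide_eq_true_eq] at hc
    simpa using hc
  · exact ⟨(0, 0), by simp [support, g0]⟩
  · have h : lifeStep^[4] g0 = lifeStep (lifeStep (lifeStep (lifeStep g0))) := rfl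
    rw [h, step01, step12, step23, step34, g4_translate]
end
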